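/- Let ε > 0, t ∈ ℝ, d ∈ ℝ, e > 0, f > 0 and s₊ > 0. There exists a constant M > 0, depending only on t, d, e, f, with the following property: if Q is a twice continuously differentiable map from the closed unit ball of ℝ³ into the real symmetric traceless 3×3 matrices that satisfies, componentwise with the Euclidean Laplacian Δ, the Euler–Lagrange system ε²ΔQ_{ij} = tQ_{ij} − 3√6(Q_{ik}Q_{kj} − (1/3)δ_{ij} tr Q²) + 2Q_{ij} tr Q² + (2d/5)Q_{ij} tr Q³ + (3d/5)tr Q²(Q_{ik}Q_{kj} − (1/3)δ_{ij} tr Q²) + eQ_{ij}(tr Q²)² + (f−e)tr Q³(Q_{ik}Q_{kj} − (1/3)δ_{ij} tr Q³) on the open unit ball, and satisfies Q(x) = s₊(x̂ ⊗ x̂ − (1/3)I₃) for |x| = 1 (x̂ = x/|x|), then the Frobenius norm satisfies |Q(x)| ≤ max{M, √(2/3)·s₊} for every x in the closed unit ball. -/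

import Mathlib

noncomputable section
open MeasureTheory

abbrev E3 := EuclideanSpace ℝ (Fin 3)
abbrev Mat3 := Matrix (Fin 3) (Fin 3) ℝ

/-- Euclidean Laplacian of a scalar field on ℝ³ (sum of second directional
derivatives along the standard orthonormal basis). -/
def lap (u : E3 → ℝ) (x : E3) : ℝ :=
  ∑ k : Fin 3, fderiv ℝ (fun y => fderiv ℝ u y (EuclideanSpace.single k 1)) x
    (EuclideanSpace.single k 1)

/-- Right-hand side of the Euler–Lagrange system for the sixth-order potential. -/
def ELrhs (t d e f : ℝ) (Q : Mat3) : Mat3 :=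
  t • Q
    - (3 * Real.sqrt 6) • (Q * Q - ((Q * Q).trace / 3) • (1 : Mat3))
    + (2 * (Q * Q).trace) • Q
    + (2 * d / 5 * (Q * Q * Q).trace) • Q
    + (3 * d / 5 * (Q * Q).trace) • (Q * Q - ((Q * Q).trace / 3) • (1 : Mat3))
    + (e * ((Q * Q).trace) ^ 2) • Q
    + ((f - e) * (Q * Q * Q).trace) • (Q * Q - ((Q * Q * Q).trace / 3) • (1 : Mat3))

/-- Frobenius norm of a 3×3 real matrix. -/
def fro (Q : Mat3) : ℝ := Real.sqrt (∑ i : Fin 3, ∑ j : Fin 3, (Q i j) ^ 2)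

/-- The homeotropic boundary Q-tensor `Q_{s₊}(x) = s₊(x̂⊗x̂ − I/3)`. -/
def Qbdry (sp : ℝ) (x : E3) : Mat3 :=
  sp • (Matrix.of (fun i j => x i * x j / ‖x‖ ^ 2) - (1 / 3 : ℝ) • (1 : Mat3))


lemma second_deriv_nonpos_of_isLocalMax {g g' : ℝ → ℝ} {c : ℝ}
    (hd : ∀ᶠ s in nhds (0:ℝ), HasDerivAt g (g' s) s)
    (hd2 : HasDerivAt g' c 0) (hmax : IsLocalMax g 0) : c ≤ 0 := by
  by_contra hc
  push_neg at hc
  have hg'0 : g' 0 = 0 := hmax.hasDerivAt_eq_zero hd.self_of_nhds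
  have hslope := hasDerivAt_iff_tendsto_slope.mp hd2
  have hpos : ∀ᶠ s in nhdsWithin (0:ℝ) {(0:ℝ)}ᶜ, 0 < slope g' 0 s :=
    hslope.eventually (eventually_gt_nhds hc)
  rw [eventually_nhdsWithin_iff] at hpos
  have hall : ∀ᶠ s in nhds (0:ℝ),
      HasDerivAt g (g' s) s ∧ (s ∈ ({(0:ℝ)}ᶜ : Set ℝ) → 0 < slope g' 0 s) ∧ g s ≤ g 0 :=
    hd.and (hpos.and hmax)
  obtain ⟨δ, hδ, hP⟩ := Metric.eventually_nhds_iff.mp hall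
  have hδ2 : 0 < δ/2 := by linarith
  have hmem : ∀ s : ℝ, 0 ≤ s → s ≤ δ/2 → dist s (0:ℝ) < δ := by
    intro s h0 h1; rw [Real.dist_eq, sub_zero, abs_of_nonneg h0]; linarith
  have hmono : StrictMonoOn g (Set.Icc 0 (δ/2)) := by
    apply strictMonoOn_of_deriv_pos (convex_Icc _ _)
    · intro s hs
      exact ((hP (hmem s hs.1 hs.2)).1.continuousAt).continuousWithinAt
    · intro s hs
      rw [interior_Icc] at hs
      have hsd : dist s (0:ℝ) < δ := hmem s hs.1.le hs.2.le
      have h1 := (hP hsd).1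
      have h2 := (hP hsd).2.1 (by simpa using ne_of_gt hs.1)
      rw [h1.deriv]
      have : slope g' 0 s = g' s / s := by
        rw [slope_def_field, hg'0, sub_zero, sub_zero]
      rw [this] at h2
      exact (div_pos_iff.mp h2).resolve_right (fun h => absurd hs.1 (not_lt.mpr h.2.le)) |>.1
  have hlt : g 0 < g (δ/2) :=
    hmono (Set.mem_Icc.mpr ⟨le_refl 0, hδ2.le⟩) (Set.mem_Icc.mpr ⟨hδ2.le, le_refl _⟩) hδ2
  have := (hP (hmem (δ/2) hδ2.le le_rfl)).2.2
  linarith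


def dotM (A B : Mat3) : ℝ := ∑ i : Fin 3, ∑ j : Fin 3, A i j * B i j

lemma dotM_nonneg (Q : Mat3) : 0 ≤ dotM Q Q := by
  apply Finset.sum_nonneg; intro i _; apply Finset.sum_nonneg; intro j _
  exact mul_self_nonneg _

lemma cs1 (A B : Mat3) : (dotM A B)^2 ≤ dotM A A * dotM B B := by
  have := Finset.sum_mul_sq_le_sq_mul_sq Finset.univ (fun p : Fin 3 × Fin 3 => A p.1 p.2)
    (fun p : Fin 3 × Fin 3 => B p.1 p.2)
  simpa [dotM, Fintype.sum_prod_type, sq] using this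

lemma cs2 (Q : Mat3) : dotM (Q*Q) (Q*Q) ≤ (dotM Q Q)^2 := by
  have h : ∀ i j : Fin 3, ((Q*Q) i j) * ((Q*Q) i j) ≤
      (∑ k : Fin 3, Q i k * Q i k) * (∑ k : Fin 3, Q k j * Q k j) := by
    intro i j
    have := Finset.sum_mul_sq_le_sq_mul_sq Finset.univ (fun k => Q i k) (fun k => Q k j)
    simpa [Matrix.mul_apply, sq] using this
  calc dotM (Q*Q) (Q*Q) ≤ ∑ i : Fin 3, ∑ j : Fin 3,
        (∑ k : Fin 3, Q i k * Q i k) * (∑ k : Fin 3, Q k j * Q k j) := by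
        apply Finset.sum_le_sum; intro i _; apply Finset.sum_le_sum; intro j _; exact h i j
    _ = (dotM Q Q)^2 := by
        rw [dotM, sq]
        rw [← Finset.sum_mul_sum]
        rw [show (∑ j : Fin 3, ∑ k : Fin 3, Q k j * Q k j) = ∑ k : Fin 3, ∑ j : Fin 3, Q k j * Q k j from Finset.sum_comm]

lemma b_sq_le (Q : Mat3) : (dotM Q (Q*Q))^2 ≤ (dotM Q Q)^3 := by
  calc (dotM Q (Q*Q))^2 ≤ dotM Q Q * dotM (Q*Q) (Q*Q) := cs1 Q (Q*Q)
    _ ≤ dotM Q Q * (dotM Q Q)^2 := by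
        exact mul_le_mul_of_nonneg_left (cs2 Q) (dotM_nonneg Q)
    _ = (dotM Q Q)^3 := by ring


lemma dotM_one (Q : Mat3) (ht : Q.trace = 0) : dotM Q 1 = 0 := by
  simp [dotM, Matrix.one_apply, Fin.sum_univ_three]
  simpa [Matrix.trace_fin_three] using ht

lemma trQQ (Q : Mat3) (hs : Q.IsSymm) : (Q*Q).trace = dotM Q Q := by
  have h10 : Q 1 0 = Q 0 1 := hs.apply 0 1
  have h20 : Q 2 0 = Q 0 2 := hs.apply 0 2
  have h21 : Q 2 1 = Q 1 2 := hs.apply 1 2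
  simp [dotM, Matrix.trace_fin_three, Matrix.mul_apply, Fin.sum_univ_three, h10, h20, h21]

lemma trQQQ (Q : Mat3) (hs : Q.IsSymm) : (Q*Q*Q).trace = dotM Q (Q*Q) := by
  have h10 : Q 1 0 = Q 0 1 := hs.apply 0 1
  have h20 : Q 2 0 = Q 0 2 := hs.apply 0 2
  have h21 : Q 2 1 = Q 1 2 := hs.apply 1 2
  simp [dotM, Matrix.trace_fin_three, Matrix.mul_apply, Fin.sum_univ_three, h10, h20, h21]
  ring

lemma dotM_smul (Q : Mat3) (x : ℝ) (M : Mat3) : dotM Q (x • M) = x * dotM Q M := by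
  simp only [dotM, Matrix.smul_apply, smul_eq_mul, Finset.mul_sum]
  congr 1; ext i; congr 1; ext j; ring

lemma dotM_add (Q M N : Mat3) : dotM Q (M + N) = dotM Q M + dotM Q N := by
  simp [dotM, Matrix.add_apply, mul_add, Finset.sum_add_distrib]

lemma dotM_sub (Q M N : Mat3) : dotM Q (M - N) = dotM Q M - dotM Q N := by
  simp [dotM, Matrix.sub_apply, mul_sub, Finset.sum_sub_distrib]

lemma F_eq (t d e f : ℝ) (Q : Mat3) (hs : Q.IsSymm) (ht : Q.trace = 0) :
    dotM Q (ELrhs t d e f Q) =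
      t * dotM Q Q + 2 * (dotM Q Q)^2 + e * (dotM Q Q)^3
      + (f - e) * ((Q*Q*Q).trace)^2
      + d * dotM Q Q * (Q*Q*Q).trace
      - 3 * Real.sqrt 6 * (Q*Q*Q).trace := by
  rw [ELrhs]
  simp only [dotM_add, dotM_sub, dotM_smul, dotM_one Q ht, ← trQQQ Q hs, trQQ Q hs]
  ring


set_option maxHeartbeats 1000000 in
lemma F_pos (t d e f : ℝ) (he : 0 < e) (hf : 0 < f) :
    ∃ A : ℝ, 1 ≤ A ∧ ∀ a b : ℝ, b^2 ≤ a^3 → A ≤ a →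
      0 < t*a + 2*a^2 + e*a^3 + (f-e)*b^2 + d*a*b - 3*Real.sqrt 6*b := by
  set m := min e f with hmdef
  have hm : 0 < m := lt_min he hf
  have hm2 : 0 < m^2 := by positivity
  refine ⟨max 1 (max ((4*|t| +4)/m) (max (16*(|d|+1)^2/m^2) (1024/m^2))), le_max_left _ _, ?_⟩
  intro a b hb hA
  have ha1 : (1:ℝ) ≤ a := le_trans (le_max_left _ _) hA
  have ha0 : 0 < a := lt_of_lt_of_le one_pos ha1
  have hmA1 : 4*|t| +4 ≤ m*a := by
    have h := le_trans (le_trans (le_max_left _ _) (le_max_right 1 _)) hA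
    rw [div_le_iff₀ hm] at h; linarith [h]
  have hmA2 : 16*(|d|+1)^2 ≤ m^2*a := by
    have h := le_trans (le_trans (le_max_left _ _) (le_max_right _ _)) (le_trans (le_max_right 1 _) hA)
    rw [div_le_iff₀ hm2] at h; linarith [h]
  have hmA3 : (1024:ℝ) ≤ m^2*a := by
    have h := le_trans (le_trans (le_max_right _ _) (le_max_right _ _)) (le_trans (le_max_right 1 _) hA)
    rw [div_le_iff₀ hm2] at h; linarith [h]
  -- piece 1 : sixth order dominance
  have h1 : m*a^3 ≤ e*a^3 + (f-e)*b^2 := by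
    rcases le_total e f with hef | hef
    · have hme : m = e := min_eq_left hef
      nlinarith [sq_nonneg b]
    · have hmf : m = f := min_eq_right hef
      nlinarith [hb, sq_nonneg b]
  -- piece 2 : |d| a |b| ≤ (m/4) a^3
  have hdb : |d| * (a*|b|) ≤ (m/4)*a^3 := by
    have hsq : (|d| * (a*|b|))^2 ≤ ((m/4)*a^3)^2 := by
      have e1 : (|d| * (a*|b|))^2 = d^2*a^2*b^2 := by
        rw [mul_pow, mul_pow, sq_abs, sq_abs]; ring
      have e2 : ((m/4)*a^3)^2 = (m^2*a/16)*a^2*a^3 := by ring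
      rw [e1, e2]
      calc d^2*a^2*b^2 ≤ d^2*a^2*a^3 := by
            apply mul_le_mul_of_nonneg_left hb (by positivity)
        _ ≤ ((|d|+1)^2*a^2)*a^3 := by
            apply mul_le_mul_of_nonneg_right _ (by positivity)
            apply mul_le_mul_of_nonneg_right _ (by positivity)
            nlinarith [abs_nonneg d, sq_abs d]
        _ ≤ ((m^2*a/16)*a^2)*a^3 := by
            apply mul_le_mul_of_nonneg_right _ (by positivity)
            apply mul_le_mul_of_nonneg_right _ (by positivity)
            linarith
        _ = (m^2*a/16)*a^2*a^3 := by ring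
    have h0 : (0:ℝ) ≤ |d| * (a*|b|) := by positivity
    have h0' : (0:ℝ) ≤ (m/4)*a^3 := by positivity
    nlinarith [hsq, h0, h0']
  -- piece 3 : 3√6 |b| ≤ (m/4) a^3
  have hsb : 3*Real.sqrt 6*|b| ≤ (m/4)*a^3 := by
    have h6 : Real.sqrt 6 ^ 2 = 6 := Real.sq_sqrt (by norm_num)
    have hsq : (3*Real.sqrt 6*|b|)^2 ≤ ((m/4)*a^3)^2 := by
      have e1 : (3*Real.sqrt 6*|b|)^2 = 54*b^2 := by
        rw [mul_pow, mul_pow, sq_abs, h6]; ring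
      have e2 : ((m/4)*a^3)^2 = (m^2*a/16)*a^2*a^3 := by ring
      rw [e1, e2]
      calc (54:ℝ)*b^2 ≤ 54*a^3 := by nlinarith [hb]
        _ ≤ ((m^2*a/16)*a^2)*a^3 := by
            apply mul_le_mul_of_nonneg_right _ (by positivity)
            have h54 : (54:ℝ) ≤ m^2*a/16 := by linarith
            nlinarith [sq_nonneg a, ha1]
        _ = (m^2*a/16)*a^2*a^3 := by ring
    have h0 : (0:ℝ) ≤ 3*Real.sqrt 6*|b| := by positivity
    have h0' : (0:ℝ) ≤ (m/4)*a^3 := by positivity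
    nlinarith [hsq, h0, h0']
  -- combine
  have hdab : -((m/4)*a^3) ≤ d*a*b := by
    have habs : |d*a*b| = |d| * (a * |b|) := by
      rw [abs_mul, abs_mul, abs_of_pos ha0]; ring
    have h2 : |d*a*b| ≤ (m/4)*a^3 := by rw [habs]; exact hdb
    linarith [neg_abs_le (d*a*b)]
  have hsbb : -((m/4)*a^3) ≤ -(3*Real.sqrt 6*b) := by
    have habs : |3*Real.sqrt 6*b| = 3*Real.sqrt 6*|b| := by
      rw [abs_mul, abs_of_nonneg (show (0:ℝ) ≤ 3*Real.sqrt 6 by positivity)]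
    have h2 : |3*Real.sqrt 6*b| ≤ (m/4)*a^3 := by rw [habs]; exact hsb
    linarith [le_abs_self (3*Real.sqrt 6*b)]
  have hta : -(|t| * a) ≤ t*a := by
    nlinarith [neg_abs_le t, ha0.le]
  have hlast : 2*(|t| * a^2) + 2*a^2 ≤ (m/2)*a^3 := by
    have h3 : (4*|t| +4)*a^2 ≤ (m*a)*a^2 := mul_le_mul_of_nonneg_right hmA1 (by positivity)
    nlinarith [h3]
  have htaa : |t| * a ≤ |t| * a^2 := by
    apply mul_le_mul_of_nonneg_left _ (abs_nonneg t)
    nlinarith [ha1]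
  linarith [h1, hdab, hsbb, hta, hlast, htaa, pow_pos ha0 2, mul_nonneg (abs_nonneg t) (sq_nonneg a)]

set_option maxHeartbeats 1000000 in
lemma sum_u_lap_nonpos (Q : E3 → Mat3)
    (hC2 : ∀ i j, ContDiffOn ℝ 2 (fun y => Q y i j) (Metric.closedBall (0 : E3) 1))
    (x₀ : E3) (hx₀ : x₀ ∈ Metric.ball (0:E3) 1)
    (hmax : IsMaxOn (fun y => ∑ i : Fin 3, ∑ j : Fin 3, Q y i j * Q y i j)
      (Metric.closedBall (0:E3) 1) x₀) :
    ∑ i : Fin 3, ∑ j : Fin 3, Q x₀ i j * lap (fun y => Q y i j) x₀ ≤ 0 := by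
  classical
  set U := Metric.ball (0:E3) 1 with hUdef
  have hUo : IsOpen U := Metric.isOpen_ball
  have hsub : U ⊆ Metric.closedBall (0:E3) 1 := Metric.ball_subset_closedBall
  set u : Fin 3 → Fin 3 → E3 → ℝ := fun i j y => Q y i j with hudef
  have hCA : ∀ i j, ∀ y ∈ U, ContDiffAt ℝ 2 (u i j) y := fun i j y hy =>
    (((hC2 i j).mono hsub).contDiffAt (hUo.mem_nhds hy))
  have hdiff : ∀ i j, ∀ y ∈ U, DifferentiableAt ℝ (u i j) y := fun i j y hy =>
    (hCA i j y hy).differentiableAt (by norm_num)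
  have hdf : ∀ i j, ∀ y ∈ U, DifferentiableAt ℝ (fun z => fderiv ℝ (u i j) z) y := by
    intro i j y hy
    exact ((hCA i j y hy).fderiv_right (m := 1) (by norm_num)).differentiableAt (by norm_num)
  set E : Fin 3 → E3 := fun k => EuclideanSpace.single k 1 with hEdef
  set v : E3 → ℝ := fun y => ∑ i : Fin 3, ∑ j : Fin 3, u i j y * u i j y with hvdef
  set Dv : E3 → (E3 →L[ℝ] ℝ) := fun y => ∑ i : Fin 3, ∑ j : Fin 3,
      ((2 : ℝ) * u i j y) • fderiv ℝ (u i j) y with hDvdef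
  have hv : ∀ y ∈ U, HasFDerivAt v (Dv y) y := by
    intro y hy
    apply HasFDerivAt.fun_sum
    intro i _
    apply HasFDerivAt.fun_sum
    intro j _
    have h := ((hdiff i j y hy).hasFDerivAt).mul ((hdiff i j y hy).hasFDerivAt)
    rw [two_mul, add_smul]
    exact h
  set w : Fin 3 → Fin 3 → Fin 3 → E3 → ℝ :=
      fun i j k y => fderiv ℝ (u i j) y (E k) with hwdef
  have hwd : ∀ i j k, ∀ y ∈ U, DifferentiableAt ℝ (w i j k) y := by
    intro i j k y hy
    exact ((ContinuousLinearMap.apply ℝ ℝ (E k)).differentiableAt).comp y (hdf i j y hy)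
  set g1 : Fin 3 → E3 → ℝ := fun k y => fderiv ℝ v y (E k) with hg1def
  have hg1U : ∀ k, ∀ y ∈ U, g1 k y = ∑ i : Fin 3, ∑ j : Fin 3,
      ((2:ℝ) * u i j y) * w i j k y := by
    intro k y hy
    have := (hv y hy).fderiv
    simp only [hg1def, this, hDvdef, ContinuousLinearMap.coe_sum', Finset.sum_apply,
      ContinuousLinearMap.coe_smul', Pi.smul_apply, smul_eq_mul]
    rfl
  set D2 : Fin 3 → (E3 →L[ℝ] ℝ) := fun k => ∑ i : Fin 3, ∑ j : Fin 3,
      (((2:ℝ) * u i j x₀) • fderiv ℝ (w i j k) x₀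
       + w i j k x₀ • ((2:ℝ) • fderiv ℝ (u i j) x₀)) with hD2def
  have hG : ∀ k, HasFDerivAt (g1 k) (D2 k) x₀ := by
    intro k
    have hh : HasFDerivAt (fun y => ∑ i : Fin 3, ∑ j : Fin 3,
        ((2:ℝ) * u i j y) * w i j k y) (D2 k) x₀ := by
      apply HasFDerivAt.fun_sum
      intro i _
      apply HasFDerivAt.fun_sum
      intro j _
      have hcu : HasFDerivAt (fun y => (2:ℝ) * u i j y)
          ((2:ℝ) • fderiv ℝ (u i j) x₀) x₀ :=
        ((hdiff i j x₀ hx₀).hasFDerivAt).const_mul 2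
      have hcw : HasFDerivAt (w i j k) (fderiv ℝ (w i j k) x₀) x₀ :=
        (hwd i j k x₀ hx₀).hasFDerivAt
      exact hcu.mul hcw
    apply hh.congr_of_eventuallyEq
    filter_upwards [hUo.mem_nhds hx₀] with y hy
    exact hg1U k y hy
  -- second derivative test in each direction
  have hck : ∀ k, D2 k (E k) ≤ 0 := by
    intro k
    set L : ℝ → E3 := fun s => x₀ + s • E k with hLdef
    have hL : ∀ s : ℝ, HasDerivAt L (E k) s := by
      intro s
      have h := ((hasDerivAt_id s).smul_const (E k)).const_add x₀
      simpa [hLdef] using h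
    have hL0 : L 0 = x₀ := by simp [hLdef]
    have hLc : Continuous L := by fun_prop
    have hev : ∀ᶠ s in nhds (0:ℝ), L s ∈ U := by
      have : U ∈ nhds (L 0) := hUo.mem_nhds (by rw [hL0]; exact hx₀)
      exact hLc.continuousAt.preimage_mem_nhds this
    have hd : ∀ᶠ s in nhds (0:ℝ), HasDerivAt (fun s => v (L s)) (g1 k (L s)) s := by
      filter_upwards [hev] with s hs
      have h1 : HasFDerivAt v (Dv (L s)) (L s) := hv _ hs
      have h2 := h1.comp_hasDerivAt s (hL s)
      have h3 : g1 k (L s) = Dv (L s) (E k) := by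
        show (fderiv ℝ v (L s)) (E k) = _
        rw [h1.fderiv]
      rw [h3]
      exact h2
    have hd2 : HasDerivAt (fun s => g1 k (L s)) (D2 k (E k)) 0 := by
      have hGk' : HasFDerivAt (g1 k) (D2 k) (L 0) := by rw [hL0]; exact hG k
      exact hGk'.comp_hasDerivAt 0 (hL 0)
    have hmax' : IsLocalMax (fun s => v (L s)) 0 := by
      filter_upwards [hev] with s hs
      have := hmax (hsub hs)
      simpa [hL0] using this
    exact second_deriv_nonpos_of_isLocalMax hd hd2 hmax'
  -- expand D2 k (E k)
  have hsplit : ∀ k, D2 k (E k) =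
      (∑ i : Fin 3, ∑ j : Fin 3, 2 * u i j x₀ * fderiv ℝ (w i j k) x₀ (E k))
      + (∑ i : Fin 3, ∑ j : Fin 3,
          2 * (fderiv ℝ (u i j) x₀ (E k) * fderiv ℝ (u i j) x₀ (E k))) := by
    intro k
    show (∑ i : Fin 3, ∑ j : Fin 3,
      (((2:ℝ) * u i j x₀) • fderiv ℝ (w i j k) x₀
       + w i j k x₀ • ((2:ℝ) • fderiv ℝ (u i j) x₀))) (E k) = _
    rw [ContinuousLinearMap.sum_apply]
    rw [← Finset.sum_add_distrib]
    apply Finset.sum_congr rfl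
    intro i _
    rw [ContinuousLinearMap.sum_apply, ← Finset.sum_add_distrib]
    apply Finset.sum_congr rfl
    intro j _
    simp only [ContinuousLinearMap.add_apply, ContinuousLinearMap.smul_apply, smul_eq_mul]
    show 2 * u i j x₀ * fderiv ℝ (w i j k) x₀ (E k)
        + fderiv ℝ (u i j) x₀ (E k) * (2 * fderiv ℝ (u i j) x₀ (E k)) = _
    ring
  have hlap : ∀ i j, lap (fun y => Q y i j) x₀ = ∑ k : Fin 3, fderiv ℝ (w i j k) x₀ (E k) :=
    fun i j => rfl
  have hmain : ∑ i : Fin 3, ∑ j : Fin 3, 2 * (Q x₀ i j * lap (fun y => Q y i j) x₀)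
      = ∑ k : Fin 3, ∑ i : Fin 3, ∑ j : Fin 3,
          2 * u i j x₀ * fderiv ℝ (w i j k) x₀ (E k) := by
    have h1 : ∀ i j : Fin 3, 2 * (Q x₀ i j * lap (fun y => Q y i j) x₀)
        = ∑ k : Fin 3, 2 * u i j x₀ * fderiv ℝ (w i j k) x₀ (E k) := by
      intro i j
      rw [hlap i j]
      show 2 * (u i j x₀ * ∑ k : Fin 3, fderiv ℝ (w i j k) x₀ (E k)) = _
      rw [Finset.mul_sum, Finset.mul_sum]
      apply Finset.sum_congr rfl
      intro k _
      ring
    calc ∑ i : Fin 3, ∑ j : Fin 3, 2 * (Q x₀ i j * lap (fun y => Q y i j) x₀)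
        = ∑ i : Fin 3, ∑ j : Fin 3, ∑ k : Fin 3,
            2 * u i j x₀ * fderiv ℝ (w i j k) x₀ (E k) := by
          apply Finset.sum_congr rfl; intro i _; apply Finset.sum_congr rfl; intro j _
          exact h1 i j
      _ = ∑ i : Fin 3, ∑ k : Fin 3, ∑ j : Fin 3,
            2 * u i j x₀ * fderiv ℝ (w i j k) x₀ (E k) := by
          apply Finset.sum_congr rfl; intro i _; exact Finset.sum_comm
      _ = ∑ k : Fin 3, ∑ i : Fin 3, ∑ j : Fin 3,
            2 * u i j x₀ * fderiv ℝ (w i j k) x₀ (E k) := Finset.sum_comm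
  have hsq : 0 ≤ ∑ k : Fin 3, ∑ i : Fin 3, ∑ j : Fin 3,
      2 * (fderiv ℝ (u i j) x₀ (E k) * fderiv ℝ (u i j) x₀ (E k)) := by
    apply Finset.sum_nonneg; intro k _
    apply Finset.sum_nonneg; intro i _
    apply Finset.sum_nonneg; intro j _
    nlinarith [mul_self_nonneg (fderiv ℝ (u i j) x₀ (E k))]
  have hsumD2 : ∑ k : Fin 3, D2 k (E k) ≤ 0 :=
    Finset.sum_nonpos (fun k _ => hck k)
  have htot : ∑ i : Fin 3, ∑ j : Fin 3, 2 * (Q x₀ i j * lap (fun y => Q y i j) x₀)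
      = (∑ k : Fin 3, D2 k (E k)) - ∑ k : Fin 3, ∑ i : Fin 3, ∑ j : Fin 3,
          2 * (fderiv ℝ (u i j) x₀ (E k) * fderiv ℝ (u i j) x₀ (E k)) := by
    rw [hmain]
    rw [Finset.sum_congr rfl (fun k _ => hsplit k), Finset.sum_add_distrib]
    ring
  have h2sum : ∑ i : Fin 3, ∑ j : Fin 3, 2 * (Q x₀ i j * lap (fun y => Q y i j) x₀)
      = 2 * ∑ i : Fin 3, ∑ j : Fin 3, Q x₀ i j * lap (fun y => Q y i j) x₀ := by
    rw [Finset.mul_sum]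
    apply Finset.sum_congr rfl
    intro i _
    rw [Finset.mul_sum]
  linarith [htot, hsq, hsumD2, h2sum.symm.trans htot]


lemma bdry_dot (sp : ℝ) (x : E3) (hx : ‖x‖ = 1) :
    dotM (Qbdry sp x) (Qbdry sp x) = 2/3 * sp^2 := by
  have hS : x 0^2 + x 1^2 + x 2^2 = 1 := by
    have h := EuclideanSpace.norm_eq x
    rw [hx] at h
    have hnn : (0:ℝ) ≤ ∑ i : Fin 3, ‖x i‖^2 := by positivity
    have h2 : (∑ i : Fin 3, ‖x i‖^2) = 1 := Real.sqrt_eq_one.mp h.symm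
    simpa [Fin.sum_univ_three, sq_abs, Real.norm_eq_abs] using h2
  simp only [dotM, Qbdry, Matrix.smul_apply, Matrix.sub_apply, Matrix.of_apply,
    Matrix.one_apply, hx, one_pow, div_one, smul_eq_mul, Fin.sum_univ_three]
  norm_num [Fin.ext_iff]
  linear_combination (sp^2 * (x 0^2 + x 1^2 + x 2^2 + 1/3)) * hS

/-- A priori bound for solutions of the Euler–Lagrange system with the
sixth-order potential: there is `M = M(t,d,e,f) > 0` such that every classical
solution with homeotropic boundary data satisfies
`|Q(x)| ≤ max{M, √(2/3)·s₊}` on the closed unit ball. -/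
theorem EL_solution_apriori_bound
    (t d e f : ℝ) (he : 0 < e) (hf : 0 < f) :
    ∃ M : ℝ, 0 < M ∧ ∀ ε : ℝ, 0 < ε → ∀ sp : ℝ, 0 < sp → ∀ Q : E3 → Mat3,
      (∀ i j, ContDiffOn ℝ 2 (fun y => Q y i j) (Metric.closedBall (0 : E3) 1)) →
      (∀ x ∈ Metric.closedBall (0 : E3) 1, (Q x).IsSymm ∧ (Q x).trace = 0) →
      (∀ x ∈ Metric.ball (0 : E3) 1, ∀ i j,
        ε ^ 2 * lap (fun y => Q y i j) x = ELrhs t d e f (Q x) i j) →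
      (∀ x : E3, ‖x‖ = 1 → Q x = Qbdry sp x) →
      ∀ x ∈ Metric.closedBall (0 : E3) 1,
        fro (Q x) ≤ max M (Real.sqrt (2 / 3) * sp) := by
  classical
  obtain ⟨A, hA1, hF⟩ := F_pos t d e f he hf
  have hA0 : (0:ℝ) < A := lt_of_lt_of_le one_pos hA1
  refine ⟨Real.sqrt A, Real.sqrt_pos.mpr hA0, ?_⟩
  intro ε hε sp hsp Q hC2 hsymtr hPDE hbd x hx
  set v : E3 → ℝ := fun y => ∑ i : Fin 3, ∑ j : Fin 3, Q y i j * Q y i j with hvdef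
  have hvc : ContinuousOn v (Metric.closedBall (0:E3) 1) := by
    apply continuousOn_finset_sum
    intro i _
    apply continuousOn_finset_sum
    intro j _
    exact ((hC2 i j).continuousOn).mul ((hC2 i j).continuousOn)
  have hne : (Metric.closedBall (0:E3) 1).Nonempty := ⟨0, Metric.mem_closedBall_self one_pos.le⟩
  obtain ⟨x₀, hx₀mem, hx₀max⟩ :=
    (isCompact_closedBall (0:E3) 1).exists_isMaxOn hne hvc
  have hx₀n : ‖x₀‖ ≤ 1 := by simpa [Metric.mem_closedBall] using hx₀mem
  have hvb : v x₀ ≤ max A (2/3 * sp^2) := by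
    rcases lt_or_eq_of_le hx₀n with hlt | heq1
    · -- interior maximum point
      by_contra hcon
      push_neg at hcon
      have hAle : A ≤ v x₀ := le_trans (le_max_left _ _) hcon.le
      have hin : x₀ ∈ Metric.ball (0:E3) 1 := by simpa [Metric.mem_ball] using hlt
      have hkey := sum_u_lap_nonpos Q hC2 x₀ hin hx₀max
      have hEL : dotM (Q x₀) (ELrhs t d e f (Q x₀)) ≤ 0 := by
        have h1 : ∀ i j, Q x₀ i j * ELrhs t d e f (Q x₀) i j
            = ε^2 * (Q x₀ i j * lap (fun y => Q y i j) x₀) := by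
          intro i j
          rw [← hPDE x₀ hin i j]
          ring
        have h2 : dotM (Q x₀) (ELrhs t d e f (Q x₀))
            = ε^2 * ∑ i : Fin 3, ∑ j : Fin 3, Q x₀ i j * lap (fun y => Q y i j) x₀ := by
          rw [dotM, Finset.mul_sum]
          apply Finset.sum_congr rfl
          intro i _
          rw [Finset.mul_sum]
          exact Finset.sum_congr rfl fun j _ => h1 i j
        rw [h2]
        have hε2 : (0:ℝ) ≤ ε^2 := sq_nonneg ε
        exact mul_nonpos_of_nonneg_of_nonpos hε2 hkey
      have hsym := hsymtr x₀ hx₀mem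
      have hfe := F_eq t d e f (Q x₀) hsym.1 hsym.2
      have hbsq := b_sq_le (Q x₀)
      have hQQ2 : dotM (Q x₀) (Q x₀) = v x₀ := rfl
      have hQQQ : dotM (Q x₀) (Q x₀ * Q x₀) = (Q x₀ * Q x₀ * Q x₀).trace :=
        (trQQQ (Q x₀) hsym.1).symm
      have haA : A ≤ dotM (Q x₀) (Q x₀) := by rw [hQQ2]; exact hAle
      have hbsq' : ((Q x₀ * Q x₀ * Q x₀).trace)^2 ≤ (dotM (Q x₀) (Q x₀))^3 := by
        rw [← hQQQ]; exact hbsq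
      have hpos := hF (dotM (Q x₀) (Q x₀)) ((Q x₀ * Q x₀ * Q x₀).trace) hbsq' haA
      linarith [hfe, hEL, hpos]
    · -- boundary maximum point
      have hQb : Q x₀ = Qbdry sp x₀ := hbd x₀ heq1
      have : v x₀ = 2/3 * sp^2 := by
        have : dotM (Q x₀) (Q x₀) = 2/3 * sp^2 := by
          rw [hQb]; exact bdry_dot sp x₀ heq1
        exact this
      rw [this]
      exact le_max_right _ _
  -- conclude
  have hvx : v x ≤ v x₀ := hx₀max hx
  have hfv : fro (Q x) = Real.sqrt (v x) := by
    unfold fro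
    congr 1
    apply Finset.sum_congr rfl
    intro i _
    apply Finset.sum_congr rfl
    intro j _
    ring
  have hb : v x ≤ max A (2/3 * sp^2) := le_trans hvx hvb
  rcases le_total A (2/3 * sp^2) with hAB | hAB
  · rw [max_eq_right hAB] at hb
    have h1 : Real.sqrt (v x) ≤ Real.sqrt (2/3 * sp^2) := Real.sqrt_le_sqrt hb
    have h2 : Real.sqrt (2/3 * sp^2) = Real.sqrt (2/3) * sp := by
      rw [Real.sqrt_mul (by norm_num : (0:ℝ) ≤ 2/3), Real.sqrt_sq hsp.le]
    rw [hfv]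
    exact le_trans (h2 ▸ h1) (le_max_right _ _)
  · rw [max_eq_left hAB] at hb
    have h1 : Real.sqrt (v x) ≤ Real.sqrt A := Real.sqrt_le_sqrt hb
    rw [hfv]
    exact le_trans h1 (le_max_left _ _)
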